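/- Let f be an odd positive integer, t a positive divisor of f with f − t = 2t(2m+1) for a nonnegative integer m, and set n = (f−1)/2. Then for each ε ∈ {1, −1}, gcd(2^(f−t) + 1, 2^f + ε·2^(n+1) + 1) = 2^t + ε·(−1)^(m+1)·2^((t+1)/2) + 1. -/

import Mathlib

lemma aux_dvd_a (t s m : ℕ) (ht : t + 1 = 2 * s) (δ : ℤ) (hδ : δ * δ = 1) :
    (2 ^ t + δ * 2 ^ s + 1) ∣ (2 ^ (2 * t * (2 * m + 1)) + 1 : ℤ) := by
  have hx2 : (2:ℤ) ^ s * 2 ^ s = 2 * 2 ^ t := by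
    rw [← pow_add, ← pow_succ']; congr 1; omega
  set L : ℤ := 2 ^ t + δ * 2 ^ s + 1 with hLdef
  have hL1 : L ∣ (2:ℤ) ^ (2*t) + 1 := by
    refine ⟨2 ^ t - δ * 2 ^ s + 1, ?_⟩
    rw [two_mul, pow_add]
    linear_combination (2:ℤ)^s * 2^s * hδ + hx2
  have h2t : (2:ℤ) ^ (2*t) ≡ -1 [ZMOD L] := by
    rw [Int.modEq_iff_dvd]
    rw [show (-1:ℤ) - 2 ^ (2*t) = -(2 ^ (2*t) + 1) by ring]; exact hL1.neg_right
  have hmod : (2:ℤ) ^ (2 * t * (2 * m + 1)) ≡ (-1) ^ (2 * m + 1) [ZMOD L] := by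
    rw [pow_mul]; exact h2t.pow _
  rw [Odd.neg_one_pow ⟨m, by ring⟩] at hmod
  have := hmod.add_right 1
  rw [← Int.modEq_zero_iff_dvd]
  simpa using this

lemma aux_dvd_b (t s m : ℕ) (ht : t + 1 = 2 * s) (δ η : ℤ) (hδ : δ * δ = 1)
    (hη : η = -δ * (-1) ^ m) :
    (2 ^ t + δ * 2 ^ s + 1) ∣
      (2 ^ (t * (4 * m + 3)) + η * 2 ^ (t * (2 * m + 1) + s) + 1 : ℤ) := by
  have hx2 : (2:ℤ) ^ s * 2 ^ s = 2 * 2 ^ t := by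
    rw [← pow_add, ← pow_succ']; congr 1; omega
  set L : ℤ := 2 ^ t + δ * 2 ^ s + 1 with hLdef
  set u : ℤ := 2 ^ s + δ with hu
  have h2L : u * u + 1 = 2 * L := by rw [hu, hLdef]; linear_combination hx2 + hδ
  have huu : u * u ≡ -1 [ZMOD L] := by
    rw [Int.modEq_iff_dvd]
    exact ⟨-2, by linear_combination -h2L⟩
  have hLt : (2:ℤ) ^ t ≡ -(δ * u) [ZMOD L] := by
    rw [Int.modEq_iff_dvd]
    exact ⟨-1, by rw [hu, hLdef]; linear_combination -hδ⟩
  have e0 : (-(δ * u)) ^ 2 = u * u := by linear_combination (u*u) * hδ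
  have e1 : (-(δ * u)) ^ (4 * m + 3) = (u * u) ^ (2 * m + 1) * (-(δ * u)) := by
    rw [show 4*m+3 = 2*(2*m+1)+1 from by ring, pow_succ, pow_mul, e0]
  have e2 : (-(δ * u)) ^ (2 * m + 1) = (u * u) ^ m * (-(δ * u)) := by
    rw [pow_succ, pow_mul, e0]
  have hfm : (2:ℤ) ^ (t * (4 * m + 3)) ≡ δ * u [ZMOD L] := by
    calc (2:ℤ) ^ (t * (4 * m + 3)) = ((2:ℤ) ^ t) ^ (4 * m + 3) := by rw [pow_mul]
      _ ≡ (-(δ * u)) ^ (4 * m + 3) [ZMOD L] := hLt.pow _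
      _ = (u * u) ^ (2 * m + 1) * (-(δ * u)) := e1
      _ ≡ (-1) ^ (2 * m + 1) * (-(δ * u)) [ZMOD L] := (huu.pow _).mul_right _
      _ = δ * u := by rw [Odd.neg_one_pow ⟨m, by ring⟩]; ring
  have hnm : (2:ℤ) ^ (t * (2 * m + 1) + s) ≡ (-1) ^ m * (-(δ * u)) * 2 ^ s [ZMOD L] := by
    calc (2:ℤ) ^ (t * (2 * m + 1) + s) = ((2:ℤ) ^ t) ^ (2 * m + 1) * 2 ^ s := by
          rw [pow_add, pow_mul]
      _ ≡ (-(δ * u)) ^ (2 * m + 1) * 2 ^ s [ZMOD L] := (hLt.pow _).mul_right _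
      _ = (u * u) ^ m * (-(δ * u)) * 2 ^ s := by rw [e2]
      _ ≡ (-1) ^ m * (-(δ * u)) * 2 ^ s [ZMOD L] := ((huu.pow _).mul_right _).mul_right _
  have hq : ((-1:ℤ) ^ m) * ((-1) ^ m) = 1 := by
    rw [← pow_add]; exact Even.neg_one_pow ⟨m, rfl⟩
  have hb : (2:ℤ) ^ (t * (4 * m + 3)) + η * 2 ^ (t * (2 * m + 1) + s) + 1 ≡
      δ * u + η * ((-1) ^ m * (-(δ * u)) * 2 ^ s) + 1 [ZMOD L] :=
    (hfm.add (hnm.mul_left η)).add_right 1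
  have hval : δ * u + η * ((-1) ^ m * (-(δ * u)) * 2 ^ s) + 1 = 2 * L := by
    rw [hη, ← h2L, hu]
    linear_combination (δ * δ * (2^s + δ) * 2^s) * hq + ((2:ℤ)^s * (2^s + δ)) * hδ
  rw [← Int.modEq_zero_iff_dvd]
  calc (2:ℤ) ^ (t * (4 * m + 3)) + η * 2 ^ (t * (2 * m + 1) + s) + 1 ≡
      δ * u + η * ((-1) ^ m * (-(δ * u)) * 2 ^ s) + 1 [ZMOD L] := hb
    _ = 2 * L := hval
    _ ≡ 0 [ZMOD L] := (Int.modEq_zero_iff_dvd).mpr ⟨2, by ring⟩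

theorem gcd_add_one_case_2t (n f t m : ℕ) (hn : 1 ≤ n) (hf : f = 2 * n + 1)
    (htpos : 0 < t) (hdvd : t ∣ f) (hm : f - t = 2 * t * (2 * m + 1))
    (ε : ℤ) (hε : ε = 1 ∨ ε = -1) :
    (Int.gcd (2 ^ (f - t) + 1) (2 ^ f + ε * 2 ^ (n + 1) + 1) : ℤ) =
      2 ^ t + ε * (-1) ^ (m + 1) * 2 ^ ((t + 1) / 2) + 1 := by
  -- t is odd
  have hfodd : ¬ (2 ∣ f) := by omega
  have htodd : t % 2 = 1 := by
    rcases Nat.even_or_odd t with h | h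
    · exact absurd (dvd_trans h.two_dvd hdvd) hfodd
    · rcases h with ⟨j, hj⟩; omega
  obtain ⟨k, htk⟩ : ∃ k, t = 2 * k + 1 := ⟨t / 2, by omega⟩
  obtain ⟨s, hsdef⟩ : ∃ s : ℕ, s = k + 1 := ⟨_, rfl⟩
  have hs : (t + 1) / 2 = s := by omega
  have hts : t + 1 = 2 * s := by omega
  have htle : t ≤ f := Nat.le_of_dvd (by omega) hdvd
  have hf4 : f = t * (4 * m + 3) := by
    have h1 : f = t + (f - t) := by omega
    rw [hm] at h1; rw [h1]; ring
  have hn1 : n + 1 = t * (2 * m + 1) + s := by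
    have h2 : 2 * (n + 1) = 2 * (t * (2 * m + 1) + s) := by
      rw [show 2 * (n + 1) = f + 1 by omega, hf4, htk, hsdef]; ring
    omega
  -- sign bookkeeping
  have hε2 : ε * ε = 1 := by rcases hε with h | h <;> norm_num [h]
  obtain ⟨δ, hδdef⟩ : ∃ δ : ℤ, δ = ε * (-1) ^ (m + 1) := ⟨_, rfl⟩
  have hq : ((-1:ℤ) ^ (m + 1)) * ((-1) ^ (m + 1)) = 1 := by
    rw [← pow_add]; exact Even.neg_one_pow ⟨m + 1, rfl⟩
  have hδ2 : δ * δ = 1 := by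
    rw [hδdef]; linear_combination ((-1:ℤ) ^ (m+1) * (-1) ^ (m+1)) * hε2 + hq
  have hodd : ((-1:ℤ) ^ (m + 1)) * ((-1) ^ m) = -1 := by
    rw [← pow_add]; exact Odd.neg_one_pow ⟨m, by ring⟩
  have hη : ε = -δ * (-1) ^ m := by rw [hδdef]; linear_combination ε * hodd
  have hη' : -ε = -(-δ) * (-1) ^ m := by linear_combination -hη
  have hx2 : (2:ℤ) ^ s * 2 ^ s = 2 * 2 ^ t := by
    rw [← pow_add, ← pow_succ']; congr 1; omega
  obtain ⟨L, hLdef⟩ : ∃ L : ℤ, L = 2 ^ t + δ * 2 ^ s + 1 := ⟨_, rfl⟩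
  obtain ⟨M, hMdef⟩ : ∃ M : ℤ, M = 2 ^ t + -δ * 2 ^ s + 1 := ⟨_, rfl⟩
  obtain ⟨a, hadef⟩ : ∃ a : ℤ, a = 2 ^ (2 * t * (2 * m + 1)) + 1 := ⟨_, rfl⟩
  obtain ⟨b, hbdef⟩ : ∃ b : ℤ,
      b = 2 ^ (t * (4 * m + 3)) + ε * 2 ^ (t * (2 * m + 1) + s) + 1 := ⟨_, rfl⟩
  obtain ⟨b', hb'def⟩ : ∃ b' : ℤ,
      b' = 2 ^ (t * (4 * m + 3)) + -ε * 2 ^ (t * (2 * m + 1) + s) + 1 := ⟨_, rfl⟩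
  have hLa : L ∣ a := by rw [hLdef, hadef]; exact aux_dvd_a t s m hts δ hδ2
  have hLb : L ∣ b := by rw [hLdef, hbdef]; exact aux_dvd_b t s m hts δ ε hδ2 hη
  have hMb' : M ∣ b' := by
    rw [hMdef, hb'def]
    exact aux_dvd_b t s m hts (-δ) (-ε) (by linear_combination hδ2) hη'
  have hLM : L * M = 2 ^ (2 * t) + 1 := by
    rw [hLdef, hMdef, two_mul, pow_add]
    linear_combination (-(2:ℤ) ^ s * 2 ^ s) * hδ2 - hx2
  -- upper bound
  have hda : ((Int.gcd a b : ℕ) : ℤ) ∣ a := Int.gcd_dvd_left a b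
  have hdb : ((Int.gcd a b : ℕ) : ℤ) ∣ b := Int.gcd_dvd_right a b
  set D : ℕ := Int.gcd a b with hDdef
  have h1 : (D:ℤ) ∣ 2 ^ (2 * (2 * t * (2 * m + 1))) - 1 := by
    refine hda.trans ⟨2 ^ (2 * t * (2 * m + 1)) - 1, ?_⟩
    rw [two_mul, pow_add, hadef]; ring
  have h2 : (D:ℤ) ∣ 2 ^ (2 * (t * (4 * m + 3))) + 1 := by
    refine hdb.trans ⟨b', ?_⟩
    have hNN : (2:ℤ) ^ (t * (2 * m + 1) + s) * 2 ^ (t * (2 * m + 1) + s) =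
        2 * 2 ^ (t * (4 * m + 3)) := by
      rw [← pow_add, ← pow_succ']; congr 1
      omega
    rw [two_mul, pow_add, hbdef, hb'def]
    linear_combination (2:ℤ) ^ (t * (2*m+1) + s) * 2 ^ (t * (2*m+1) + s) * hε2 + hNN
  have h3 : (D:ℤ) ∣ 2 ^ (2 * t) + 1 := by
    have m1 : (2:ℤ) ^ (2 * (2 * t * (2 * m + 1))) ≡ 1 [ZMOD (D:ℤ)] := by
      rw [Int.modEq_iff_dvd]; simpa using h1.neg_right
    have m2 : (2:ℤ) ^ (2 * (t * (4 * m + 3))) ≡ -1 [ZMOD (D:ℤ)] := by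
      rw [Int.modEq_iff_dvd, show (-1:ℤ) - 2 ^ (2 * (t * (4 * m + 3))) = -(2 ^ (2 * (t * (4 * m + 3))) + 1) by ring]; exact h2.neg_right
    have hsplit : (2:ℤ) ^ (2 * (t * (4 * m + 3))) =
        2 ^ (2 * t) * 2 ^ (2 * (2 * t * (2 * m + 1))) := by
      rw [← pow_add]; congr 1; ring
    have hstep : (2:ℤ) ^ (2 * t) * 2 ^ (2 * (2 * t * (2 * m + 1))) ≡ -1 [ZMOD (D:ℤ)] := by
      rw [← hsplit]; exact m2
    have h4 : (2:ℤ) ^ (2 * t) ≡ -1 [ZMOD (D:ℤ)] := by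
      calc (2:ℤ) ^ (2 * t) = 2 ^ (2 * t) * 1 := by ring
        _ ≡ 2 ^ (2 * t) * 2 ^ (2 * (2 * t * (2 * m + 1))) [ZMOD (D:ℤ)] :=
            m1.symm.mul_left _
        _ ≡ -1 [ZMOD (D:ℤ)] := hstep
    have h5 := Int.modEq_iff_dvd.mp h4
    have : (D:ℤ) ∣ -(2 ^ (2 * t) + 1) := by
      rw [show -((2:ℤ) ^ (2 * t) + 1) = -1 - 2 ^ (2 * t) by ring]; exact h5
    exact dvd_neg.mp this
  have hdLM : (D:ℤ) ∣ L * M := by rw [hLM]; exact h3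
  -- coprimality of D and M
  have hbodd : ¬ (2:ℤ) ∣ b := by
    intro h
    have h2f : (2:ℤ) ∣ 2 ^ (t * (4 * m + 3)) :=
      dvd_pow_self 2 (by positivity)
    have h2n : (2:ℤ) ∣ 2 ^ (t * (2 * m + 1) + s) :=
      dvd_pow_self 2 (by positivity)
    have h21 : (2:ℤ) ∣ 1 := by
      have := h.sub (h2f.add (h2n.mul_left ε))
      rw [hbdef] at this; simpa using this
    norm_num at h21
  have hg1 : Int.gcd (D:ℤ) M = 1 := by
    set g : ℕ := Int.gcd (D:ℤ) M with hgdef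
    have hgb : (g:ℤ) ∣ b := (Int.gcd_dvd_left _ _).trans hdb
    have hgb' : (g:ℤ) ∣ b' := (Int.gcd_dvd_right _ _).trans hMb'
    have hgp : (g:ℤ) ∣ 2 ^ (t * (2 * m + 1) + s + 1) := by
      have hd : (g:ℤ) ∣ ε * (b - b') := (hgb.sub hgb').mul_left ε
      have heq : ε * (b - b') = 2 ^ (t * (2 * m + 1) + s + 1) := by
        rw [hbdef, hb'def, pow_succ]
        linear_combination 2 * (2:ℤ) ^ (t * (2*m+1) + s) * hε2
      rwa [heq] at hd
    have hgn : g ∣ 2 ^ (t * (2 * m + 1) + s + 1) := by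
      have : (g:ℤ) ∣ ((2 ^ (t * (2 * m + 1) + s + 1) : ℕ) : ℤ) := by push_cast; exact hgp
      exact_mod_cast this
    obtain ⟨i, hile, hgi⟩ := (Nat.dvd_prime_pow Nat.prime_two).mp hgn
    rcases Nat.eq_zero_or_pos i with h0 | hpos
    · rw [h0, pow_zero] at hgi; exact hgi
    · exfalso
      have h2g : (2:ℤ) ∣ (g:ℤ) := by
        have : (2:ℕ) ∣ g := hgi ▸ dvd_pow_self 2 (by omega)
        exact_mod_cast Int.natCast_dvd_natCast.mpr this
      exact hbodd (h2g.trans hgb)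
  have hcop : IsCoprime (D:ℤ) M := Int.isCoprime_iff_gcd_eq_one.mpr hg1
  have hdL : (D:ℤ) ∣ L := hcop.dvd_of_dvd_mul_right hdLM
  have hLd : L ∣ (D:ℤ) := Int.dvd_coe_gcd hLa hLb
  have hLpos : 0 ≤ L := by
    rcases Int.eq_one_or_neg_one_of_mul_eq_one' hδ2 with ⟨h, _⟩ | ⟨h, _⟩
    · rw [hLdef, h]; positivity
    · rw [hLdef, h]
      have h2s : (2:ℤ) ^ s ≤ 2 ^ t := pow_le_pow_right₀ (by norm_num) (by omega)
      nlinarith [pow_pos (show (0:ℤ) < 2 by norm_num) t]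
  have hDL : (D:ℤ) = L := Int.dvd_antisymm (by positivity) hLpos hdL hLd
  rw [hm, hf4, hn1, hs, ← hδdef, ← hadef, ← hbdef, ← hLdef]
  exact hDL
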